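/- Let 2 ≤ k ≤ n and, for 1 ≤ j ≤ k, let n_j ≤ n and L_j : ℝⁿ → ℝ^{n_j} be surjective linear maps. Then the following are equivalent: (a) for every linear subspace V of ℝⁿ, (k−1)·dim V ≤ Σ_{j=1}^k dim(L_j(V)); (b) dim(ker L_1 + ⋯ + ker L_k) = Σ_{j=1}^k dim(ker L_j), i.e. the kernels ker L_1, …, ker L_k are independent subspaces of ℝⁿ. -/
import Mathlib

open Module Submodule

variable {E : Type*} [AddCommGroup E] [Module ℝ E] [FiniteDimensional ℝ E]

lemma aux_key {F : Type*} [AddCommGroup F] [Module ℝ F] (f : E →ₗ[ℝ] F)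
    (V : Submodule ℝ E) :
    finrank ℝ ↥(V.map f) + finrank ℝ ↥(V ⊓ LinearMap.ker f) = finrank ℝ ↥V := by
  have h := LinearMap.finrank_range_add_finrank_ker (f.domRestrict V)
  rw [LinearMap.range_domRestrict, LinearMap.ker_domRestrict] at h
  rw [← h]
  congr 1
  have e1 := (Submodule.equivMapOfInjective V.subtype V.injective_subtype
    ((LinearMap.ker f).comap V.subtype)).finrank_eq
  rw [Submodule.map_comap_subtype] at e1
  exact (e1.symm.trans rfl)

lemma aux_sup_le {ι : Type*} (s : Finset ι) (W : ι → Submodule ℝ E) :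
    finrank ℝ ↥(s.sup W) ≤ ∑ i ∈ s, finrank ℝ ↥(W i) := by
  classical
  induction s using Finset.cons_induction with
  | empty => simp
  | cons a s ha ih =>
    rw [Finset.sup_cons, Finset.sum_cons]
    calc finrank ℝ ↥(W a ⊔ s.sup W)
        ≤ finrank ℝ ↥(W a ⊔ s.sup W) + finrank ℝ ↥(W a ⊓ s.sup W) := Nat.le_add_right _ _
      _ = finrank ℝ ↥(W a) + finrank ℝ ↥(s.sup W) :=
          Submodule.finrank_sup_add_finrank_inf_eq _ _
      _ ≤ _ := by omega

lemma aux_indep_mono {ι : Type*} (s : Finset ι) (W W' : ι → Submodule ℝ E)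
    (hle : ∀ i, W' i ≤ W i)
    (h : finrank ℝ ↥(s.sup W) = ∑ i ∈ s, finrank ℝ ↥(W i)) :
    finrank ℝ ↥(s.sup W') = ∑ i ∈ s, finrank ℝ ↥(W' i) := by
  classical
  induction s using Finset.cons_induction with
  | empty => simp
  | cons a s ha ih =>
    rw [Finset.sup_cons, Finset.sum_cons] at h ⊢
    have h1 := Submodule.finrank_sup_add_finrank_inf_eq (W a) (s.sup W)
    have h2 := aux_sup_le s W
    have hinf : finrank ℝ ↥(W a ⊓ s.sup W) = 0 := by omega
    have hS : finrank ℝ ↥(s.sup W) = ∑ i ∈ s, finrank ℝ ↥(W i) := by omega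
    have hbot : W a ⊓ s.sup W = ⊥ := Submodule.finrank_eq_zero.mp hinf
    have hbot' : W' a ⊓ s.sup W' = ⊥ := by
      rw [eq_bot_iff, ← hbot]
      exact inf_le_inf (hle a) (Finset.sup_mono_fun fun i _ => hle i)
    have h3 := Submodule.finrank_sup_add_finrank_inf_eq (W' a) (s.sup W')
    rw [hbot', finrank_bot] at h3
    rw [ih hS] at h3
    omega


/-- For surjective linear maps `L j : ℝⁿ → ℝ^{n j}`, `1 ≤ j ≤ k`, the
Bennett–Carbery–Christ–Tao condition with exponents `p j = 1/(k-1)`, i.e.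
`(k-1) · dim V ≤ ∑ j dim (L j V)` for every subspace `V ≤ ℝⁿ`, is equivalent to the
independence of the kernels `ker (L j)`. -/
theorem stmt_4 (n k : ℕ) (hk2 : 2 ≤ k) (hkn : k ≤ n)
    (m : Fin k → ℕ) (hm : ∀ j, m j ≤ n)
    (L : (j : Fin k) → (EuclideanSpace ℝ (Fin n)) →ₗ[ℝ] (EuclideanSpace ℝ (Fin (m j))))
    (hL : ∀ j, Function.Surjective (L j)) :
    (∀ V : Submodule ℝ (EuclideanSpace ℝ (Fin n)),
        (k - 1) * Module.finrank ℝ ↥V ≤ ∑ j, Module.finrank ℝ ↥(V.map (L j)))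
      ↔ (Module.finrank ℝ ↥(⨆ j, LinearMap.ker (L j))
          = ∑ j, Module.finrank ℝ ↥(LinearMap.ker (L j))) := by
  classical
  have hsup : (⨆ j, LinearMap.ker (L j)) = Finset.univ.sup (fun j => LinearMap.ker (L j)) :=
    (Finset.sup_univ_eq_iSup _).symm
  have key : ∀ (V : Submodule ℝ (EuclideanSpace ℝ (Fin n))) (j : Fin k),
      finrank ℝ ↥(V.map (L j)) + finrank ℝ ↥(V ⊓ LinearMap.ker (L j)) = finrank ℝ ↥V :=
    fun V j => aux_key (L j) V
  constructor
  · intro ha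
    rw [hsup]
    set V : Submodule ℝ (EuclideanSpace ℝ (Fin n)) :=
      Finset.univ.sup (fun j => LinearMap.ker (L j)) with hV
    have hle : ∀ j, LinearMap.ker (L j) ≤ V :=
      fun j => hV ▸ Finset.le_sup (f := fun j => LinearMap.ker (L j)) (Finset.mem_univ j)
    have hinf : ∀ j, V ⊓ LinearMap.ker (L j) = LinearMap.ker (L j) :=
      fun j => inf_eq_right.mpr (hle j)
    have hsum : ∑ j, (finrank ℝ ↥(V.map (L j)) + finrank ℝ ↥(LinearMap.ker (L j)))
        = k * finrank ℝ ↥V := by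
      simp_rw [fun j => (hinf j) ▸ key V j]
      simp [Finset.sum_const, Finset.card_univ]
    have hV1 := ha V
    have hVle : finrank ℝ ↥V ≤ ∑ j, finrank ℝ ↥(LinearMap.ker (L j)) := aux_sup_le _ _
    rw [Finset.sum_add_distrib] at hsum
    have hk1 : (k - 1) * finrank ℝ ↥V + finrank ℝ ↥V = k * finrank ℝ ↥V := by
      rw [Nat.sub_one_mul]
      exact Nat.sub_add_cancel (Nat.le_mul_of_pos_left _ (by omega))
    omega
  · intro hb V
    have hb' : finrank ℝ ↥(Finset.univ.sup fun j => LinearMap.ker (L j))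
        = ∑ j, finrank ℝ ↥(LinearMap.ker (L j)) := by rw [← hsup]; exact hb
    have hmono := aux_indep_mono (Finset.univ) (fun j => LinearMap.ker (L j))
      (fun j => V ⊓ LinearMap.ker (L j)) (fun j => inf_le_right) hb'
    have hsupV : (Finset.univ.sup fun j => V ⊓ LinearMap.ker (L j)) ≤ V :=
      Finset.sup_le fun j _ => inf_le_left
    have hsum : ∑ j, finrank ℝ ↥(V ⊓ LinearMap.ker (L j)) ≤ finrank ℝ ↥V :=
      hmono ▸ Submodule.finrank_mono hsupV
    have htot : ∑ j, (finrank ℝ ↥(V.map (L j)) + finrank ℝ ↥(V ⊓ LinearMap.ker (L j)))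
        = k * finrank ℝ ↥V := by
      simp_rw [key V]
      simp [Finset.sum_const, Finset.card_univ]
    rw [Finset.sum_add_distrib] at htot
    have hk1 : (k - 1) * finrank ℝ ↥V + finrank ℝ ↥V = k * finrank ℝ ↥V := by
      rw [Nat.sub_one_mul]
      exact Nat.sub_add_cancel (Nat.le_mul_of_pos_left _ (by omega))
    omega
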